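/- For p < 1/3 and using the bounds P(E_v(i,0)), P(E_v(0,j)) ≤ (p+1/n)²(1−p+2/n)^{max(i,j)} with conditional detection probability 1/(i+1) (resp. 1/(j+1)), P(E_v(0,0)) ≤ (p+1/n)² with conditional detection 1, and P(I_v) ≤ (1−p)² with conditional detection ≤ 1/(n(1−3p)), the optimal expected precision at an honest node under dandelion on a dynamic line satisfies D_OPT(v) ≤ (2p²/(1−p))·log(2/p) + O(1/n). -/

import Mathlib

set_option maxHeartbeats 1000000


/-- Dandelion on a dynamic line: for `p < 1/3`, using the conditional decomposition
bound (two geometric-harmonic sums for `E_v(i,0)` and `E_v(0,j)`, the `E_v(0,0)`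
term, and the interior term), the optimal expected precision at an honest node
satisfies `D_OPT(v) ≤ (2p²/(1−p))·log(2/p) + O(1/n)`. -/
theorem stmt_17 (p : ℝ) (hp0 : 0 < p) (hp3 : p < 1 / 3) :
    ∃ C : ℝ, ∀ n : ℕ, 4 / p ≤ (n : ℝ) → ∀ Dv : ℝ,
      Dv ≤ 2 * (∑' i : ℕ, (p + 1 / (n : ℝ)) ^ 2 * (1 - p + 2 / (n : ℝ)) ^ (i + 1)
              / ((i : ℝ) + 2))
            + (p + 1 / (n : ℝ)) ^ 2
            + (1 - p) ^ 2 / ((n : ℝ) * (1 - 3 * p)) →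
      Dv ≤ 2 * p ^ 2 / (1 - p) * Real.log (2 / p) + C / (n : ℝ) := by
  refine ⟨6 * Real.log (2 / p) / (1 - p) + (1 - p) ^ 2 / (1 - 3 * p), ?_⟩
  intro n hn Dv hDv
  have hp1 : p < 1 := by linarith
  have hn0 : (0 : ℝ) < n := lt_of_lt_of_le (by positivity) hn
  have hinv : 1 / (n : ℝ) ≤ p / 4 := by
    rw [div_le_div_iff₀ hn0 (by norm_num)]
    have h4 : 4 ≤ (n : ℝ) * p := by
      have := (div_le_iff₀ hp0).mp hn
      linarith
    nlinarith
  have h2n : 2 / (n : ℝ) ≤ p / 2 := by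
    have : 2 / (n : ℝ) = 2 * (1 / n) := by ring
    linarith
  have hnpos : (0 : ℝ) < 1 / n := by positivity
  set a : ℝ := p + 1 / (n : ℝ) with ha
  set q : ℝ := 1 - p + 2 / (n : ℝ) with hq
  have h2npos : (0 : ℝ) < 2 / n := by positivity
  have hq0 : 0 < q := by rw [hq]; linarith
  have hq1 : q < 1 := by rw [hq]; linarith
  have h1q : 1 - q = p - 2 / (n : ℝ) := by rw [hq]; ring
  have h1q0 : 0 < 1 - q := by rw [h1q]; linarith
  have hf : HasSum (fun k : ℕ => q ^ (k + 1) / ((k : ℝ) + 1)) (-Real.log (1 - q)) :=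
    Real.hasSum_pow_div_log_of_abs_lt_one (abs_lt.mpr ⟨by linarith, hq1⟩)
  have hf' : HasSum (fun i : ℕ => q ^ ((i + 1) + 1) / (((i + 1 : ℕ) : ℝ) + 1))
      (-Real.log (1 - q) - q) := by
    refine (hasSum_nat_add_iff (f := fun k : ℕ => q ^ (k + 1) / ((k : ℝ) + 1)) 1).mpr ?_
    simpa using hf
  have hsum : HasSum (fun i : ℕ => a ^ 2 * q ^ (i + 1) / ((i : ℝ) + 2))
      ((a ^ 2 / q) * (-Real.log (1 - q) - q)) := by
    have h := hf'.mul_left (a ^ 2 / q)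
    convert h using 2 with i
    case e'_3 => rfl
    have hqne : q ≠ 0 := ne_of_gt hq0
    push_cast
    field_simp
    ring
  rw [hsum.tsum_eq] at hDv
  set T : ℝ := -Real.log (1 - q) with hT
  set L : ℝ := Real.log (2 / p) with hL
  have hL0 : 0 ≤ L := Real.log_nonneg (by rw [le_div_iff₀ hp0]; linarith)
  have hTL : T ≤ L := by
    rw [hT, hL, ← Real.log_inv]
    have h1 : (1 - q)⁻¹ ≤ (p / 2)⁻¹ := by
      apply inv_anti₀ (by positivity)
      rw [h1q]; linarith
    have h2 : (p / 2)⁻¹ = 2 / p := by rw [inv_div]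
    apply Real.log_le_log (by positivity)
    rw [h2] at h1
    exact h1
  have hexp : 2 * ((a ^ 2 / q) * (T - q)) = 2 * (a ^ 2 / q) * T - 2 * a ^ 2 := by
    have hqne : q ≠ 0 := ne_of_gt hq0
    field_simp
  have ha2 : a ^ 2 ≤ p ^ 2 + 3 / n := by
    rw [ha]
    have h1 : (1 : ℝ) / n ≤ 1 := by linarith
    have key : (1 / (n : ℝ)) * (2 * p + 1 / n - 3) ≤ 0 :=
      mul_nonpos_of_nonneg_of_nonpos hnpos.le (by linarith)
    have expand : (p + 1 / (n : ℝ)) ^ 2 - (p ^ 2 + 3 / n)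
        = 1 / (n : ℝ) * (2 * p + 1 / n - 3) := by ring
    linarith [key, expand]
  have hdiv : a ^ 2 / q ≤ (p ^ 2 + 3 / n) / (1 - p) := by
    apply div_le_div₀ (by positivity) ha2 (by linarith)
    rw [hq]; linarith
  have hA2 : 2 * (a ^ 2 / q) * T ≤ 2 * (a ^ 2 / q) * L :=
    mul_le_mul_of_nonneg_left hTL (by positivity)
  have hA4 : 2 * (a ^ 2 / q) * L ≤ 2 * ((p ^ 2 + 3 / n) / (1 - p)) * L := by
    nlinarith [hdiv, hL0]
  have hA5 : 2 * ((p ^ 2 + 3 / n) / (1 - p)) * L + (1 - p) ^ 2 / ((n : ℝ) * (1 - 3 * p))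
      = 2 * p ^ 2 / (1 - p) * L
        + (6 * L / (1 - p) + (1 - p) ^ 2 / (1 - 3 * p)) / (n : ℝ) := by
    have hne1 : (1 : ℝ) - p ≠ 0 := by linarith
    have hne2 : (1 : ℝ) - 3 * p ≠ 0 := by
      have : 3 * p < 1 := by linarith
      linarith
    have hnne : (n : ℝ) ≠ 0 := ne_of_gt hn0
    field_simp
    ring
  have ha20 : 0 ≤ a ^ 2 := sq_nonneg a
  clear_value a q T L
  have step1 : Dv ≤ 2 * (a ^ 2 / q) * T - a ^ 2 + (1 - p) ^ 2 / ((n : ℝ) * (1 - 3 * p)) := by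
    linarith [hDv, hexp]
  have step2 : Dv ≤ 2 * ((p ^ 2 + 3 / n) / (1 - p)) * L
      + (1 - p) ^ 2 / ((n : ℝ) * (1 - 3 * p)) := by
    linarith [step1, hA2, hA4, ha20]
  linarith [step2, hA5]
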